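/- Let A = [[0, uᵀ, z],[0, B, v],[0, 0, 0]] be an n×n 0-1 matrix written with first row/column and last row/column split off, where u, v are 0-1 column vectors of length n−2 and z ∈ {0,1}. If A² is a 0-1 matrix, then f(u) + f(v) + z ≤ n, where f counts the number of nonzero entries. -/

import Mathlib

open Matrix

/-- A 0-1 matrix over the integers. -/
def IsZeroOne {α β : Type*} (A : Matrix α β ℤ) : Prop :=
  ∀ i j, A i j = 0 ∨ A i j = 1

/-- The number of nonzero entries of a matrix. -/
def fcount {α β : Type*} [Fintype α] [Fintype β] (A : Matrix α β ℤ) : ℕ :=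
  (Finset.univ.filter fun p : α × β => A p.1 p.2 ≠ 0).card

/-- The block matrix [[0, X, Z],[0, B, Y],[0, 0, 0]] with square zero diagonal blocks. -/
def blockH {α β γ : Type*} (X : Matrix α β ℤ) (P : Matrix β β ℤ)
    (Y : Matrix β γ ℤ) (Z : Matrix α γ ℤ) : Matrix (α ⊕ β ⊕ γ) (α ⊕ β ⊕ γ) ℤ :=
  Matrix.fromBlocks 0 (Matrix.fromCols X Z) 0 (Matrix.fromBlocks P Y 0 0)

lemma card_fin1_left {m : ℕ} (P : Fin m → Prop) [DecidablePred P] :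
    (Finset.univ.filter fun p : Fin 1 × Fin m => P p.2).card
      = (Finset.univ.filter P).card := by
  apply Finset.card_bij' (fun p _ => p.2) (fun i _ => ((0 : Fin 1), i)) <;>
    simp +contextual [Prod.ext_iff, Fin.fin_one_eq_zero]

lemma card_fin1_right {m : ℕ} (P : Fin m → Prop) [DecidablePred P] :
    (Finset.univ.filter fun p : Fin m × Fin 1 => P p.1).card
      = (Finset.univ.filter P).card := by
  apply Finset.card_bij' (fun p _ => p.1) (fun i _ => (i, (0 : Fin 1))) <;>
    simp +contextual [Prod.ext_iff, Fin.fin_one_eq_zero]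

/-- A = [[0, uᵀ, z],[0, B, v],[0, 0, 0]] with u, v 0-1 vectors of length n-2 and
z ∈ {0,1}: if A² is a 0-1 matrix, then f(u) + f(v) + z ≤ n. -/
theorem stmt18 {n m : ℕ} (hm : n = m + 2)
    (u : Matrix (Fin 1) (Fin m) ℤ) (B : Matrix (Fin m) (Fin m) ℤ)
    (v : Matrix (Fin m) (Fin 1) ℤ) (z : Matrix (Fin 1) (Fin 1) ℤ)
    (h01 : IsZeroOne (blockH u B v z))
    (hsq : IsZeroOne ((blockH u B v z) * (blockH u B v z))) :
    fcount u + fcount v + fcount z ≤ n := by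
  classical
  subst hm
  have hu : ∀ i, u 0 i = 0 ∨ u 0 i = 1 := fun i => by
    simpa [blockH] using h01 (Sum.inl 0) (Sum.inr (Sum.inl i))
  have hv : ∀ i, v i 0 = 0 ∨ v i 0 = 1 := fun i => by
    simpa [blockH] using h01 (Sum.inr (Sum.inl i)) (Sum.inr (Sum.inr 0))
  have key := hsq (Sum.inl 0) (Sum.inr (Sum.inr 0))
  simp only [blockH, Matrix.mul_apply, Fintype.sum_sum_type] at key
  simp [blockH, Matrix.mul_apply, Fintype.sum_sum_type] at key
  set S := Finset.univ.filter (fun i => u 0 i ≠ 0) with hS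
  set T := Finset.univ.filter (fun i => v i 0 ≠ 0) with hT
  have hsum : (∑ i, u 0 i * v i 0) = ((S ∩ T).card : ℤ) := by
    have hST : S ∩ T = Finset.univ.filter (fun i => u 0 i ≠ 0 ∧ v i 0 ≠ 0) := by
      rw [hS, hT, Finset.filter_and]
    rw [hST, Finset.card_filter]
    push_cast
    refine Finset.sum_congr rfl fun i _ => ?_
    rcases hu i with h | h <;> rcases hv i with h' | h' <;> simp [h, h']
  have hcard : (S ∩ T).card ≤ 1 := by
    rcases key with h | h <;> rw [hsum] at h <;> omega
  have h1 : S.card + T.card ≤ m + 1 := by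
    have := Finset.card_union_add_card_inter S T
    have h2 : (S ∪ T).card ≤ m := by
      simpa using Finset.card_le_card (Finset.subset_univ (S ∪ T))
    omega
  have hfu : fcount u = S.card := by
    have e1 : Finset.filter (fun p : Fin 1 × Fin m => u p.1 p.2 ≠ 0) Finset.univ
        = Finset.filter (fun p : Fin 1 × Fin m => u 0 p.2 ≠ 0) Finset.univ :=
      Finset.filter_congr fun p _ => by rw [Fin.fin_one_eq_zero p.1]
    rw [fcount, hS, e1]
    exact card_fin1_left fun i => u 0 i ≠ 0
  have hfv : fcount v = T.card := by
    have e1 : Finset.filter (fun p : Fin m × Fin 1 => v p.1 p.2 ≠ 0) Finset.univ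
        = Finset.filter (fun p : Fin m × Fin 1 => v p.1 0 ≠ 0) Finset.univ :=
      Finset.filter_congr fun p _ => by rw [Fin.fin_one_eq_zero p.2]
    rw [fcount, hT, e1]
    exact card_fin1_right fun i => v i 0 ≠ 0
  have hfz : fcount z ≤ 1 := by
    have : fcount z ≤ (Finset.univ : Finset (Fin 1 × Fin 1)).card :=
      Finset.card_le_card (Finset.filter_subset _ _)
    simpa using this
  omega
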